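/- Under the stated hypotheses on the G-graded T-algebra B, the T-submodule Y = Σ_{g ∈ N(G)} B_g (the sum of the homogeneous components indexed by nuclear elements of G) is contained in the nucleus N(B); Y is closed under multiplication; and the multiplication restricted to Y is associative, so that Y is an associative T-subalgebra of B. (This is the containment Σ_{g∈N(G)} B_g ⊆ N(B) established in Lemma 2.2.) -/

import Mathlib

/-- A metagroup: a set with binary operation, unique left/right division,
an identity element, and an associator `t3` taking values in the center. -/
structure Metagroup (G : Type*) where
  mul : G → G → G
  e : G
  div_left : ∀ a b : G, ∃! x : G, mul a x = b
  div_right : ∀ a b : G, ∃! y : G, mul y a = b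
  e_mul : ∀ g : G, mul e g = g
  mul_e : ∀ g : G, mul g e = g
  t3 : G → G → G → G
  mul_assoc : ∀ a b c : G, mul (mul a b) c = mul (t3 a b c) (mul a (mul b c))
  t3_comm : ∀ a b c d : G, mul (t3 a b c) d = mul d (t3 a b c)
  t3_nl : ∀ a b c d f : G, mul (mul (t3 a b c) d) f = mul (t3 a b c) (mul d f)
  t3_nm : ∀ a b c d f : G, mul (mul d (t3 a b c)) f = mul d (mul (t3 a b c) f)
  t3_nr : ∀ a b c d f : G, mul (mul d f) (t3 a b c) = mul d (mul f (t3 a b c))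

/-- The nucleus `N(G)` of a metagroup: elements associating with everything. -/
def Metagroup.nucleus {G : Type*} (M : Metagroup G) : Set G :=
  {a | ∀ b c : G,
    M.mul (M.mul a b) c = M.mul a (M.mul b c) ∧
    M.mul (M.mul b a) c = M.mul b (M.mul a c) ∧
    M.mul (M.mul b c) a = M.mul b (M.mul c a)}

/-- The nucleus of a (possibly nonassociative) `T`-algebra `B` with
multiplication `mulB`. -/
def algNucleus {T B : Type*} [CommRing T] [AddCommGroup B] [Module T B]
    (mulB : B →ₗ[T] B →ₗ[T] B) : Set B :=
  {x | ∀ b c : B,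
    mulB (mulB x b) c = mulB x (mulB b c) ∧
    mulB (mulB b x) c = mulB b (mulB x c) ∧
    mulB (mulB b c) x = mulB b (mulB c x)}

/-- If `a`, `b`, `c` actually associate, then the associator `t3 a b c` is `e`. -/
theorem Metagroup.t3_eq_e {G : Type*} (M : Metagroup G) {a b c : G}
    (h : M.mul (M.mul a b) c = M.mul a (M.mul b c)) : M.t3 a b c = M.e := by
  obtain ⟨y, _, huniq⟩ := M.div_right (M.mul a (M.mul b c)) (M.mul a (M.mul b c))
  have h1 : M.t3 a b c = y := by
    refine huniq _ ?_
    show M.mul (M.t3 a b c) (M.mul a (M.mul b c)) = M.mul a (M.mul b c)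
    rw [← M.mul_assoc]; exact h
  have h2 : M.e = y := by
    refine huniq _ ?_
    show M.mul M.e (M.mul a (M.mul b c)) = M.mul a (M.mul b c)
    exact M.e_mul _
  rw [h1, ← h2]

/-- The nucleus of a metagroup is closed under multiplication. -/
theorem Metagroup.nucleus_mul {G : Type*} (M : Metagroup G) {a b : G}
    (ha : a ∈ M.nucleus) (hb : b ∈ M.nucleus) : M.mul a b ∈ M.nucleus := by
  intro c d
  refine ⟨?_, ?_, ?_⟩
  · rw [(ha b c).1, (ha (M.mul b c) d).1, (hb c d).1, ← (ha b (M.mul c d)).1]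
  · rw [← (ha c b).2.1, (hb (M.mul c a) d).2.1, (ha c (M.mul b d)).2.1,
      ← (ha b d).1]
  · rw [← (hb (M.mul c d) a).2.2, (ha c d).2.2, (hb c (M.mul d a)).2.2,
      (ha d b).2.1]

/-- Lemma 2.2 (containment part): for a `G`-graded `T`-algebra `B` over a
metagroup `G`, the submodule `Y = Σ_{g ∈ N(G)} B_g` is contained in the
nucleus `N(B)`, is closed under multiplication, and the multiplication
restricted to `Y` is associative, i.e. `Y` is an associative `T`-subalgebra
of `B`. -/
theorem statement2 {G : Type*} (M : Metagroup G)
    (T B : Type*) [CommRing T] [AddCommGroup B] [Module T B]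
    (mulB : B →ₗ[T] B →ₗ[T] B)
    (Bg : G → Submodule T B)
    (hsum : (⨆ g : G, Bg g) = (⊤ : Submodule T B))
    (hgr : ∀ g h : G, ∀ x ∈ Bg g, ∀ y ∈ Bg h, mulB x y ∈ Bg (M.mul g h))
    (act : G → B →ₗ[T] B)
    (hacte : act M.e = LinearMap.id)
    (hassoc : ∀ g h s : G, ∀ x ∈ Bg g, ∀ y ∈ Bg h, ∀ z ∈ Bg s,
      mulB (mulB x y) z = act (M.t3 g h s) (mulB x (mulB y z))) :
    (∀ x ∈ (⨆ g ∈ M.nucleus, Bg g : Submodule T B), x ∈ algNucleus mulB) ∧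
    (∀ x ∈ (⨆ g ∈ M.nucleus, Bg g : Submodule T B),
     ∀ y ∈ (⨆ g ∈ M.nucleus, Bg g : Submodule T B),
      mulB x y ∈ (⨆ g ∈ M.nucleus, Bg g : Submodule T B)) ∧
    (∀ x ∈ (⨆ g ∈ M.nucleus, Bg g : Submodule T B),
     ∀ y ∈ (⨆ g ∈ M.nucleus, Bg g : Submodule T B),
     ∀ z ∈ (⨆ g ∈ M.nucleus, Bg g : Submodule T B),
      mulB (mulB x y) z = mulB x (mulB y z)) := by
  set Y : Submodule T B := ⨆ g ∈ M.nucleus, Bg g with hY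
  -- induction principle for all of B
  have ind : ∀ {C : B → Prop}, (∀ g : G, ∀ x ∈ Bg g, C x) → C 0 →
      (∀ x y : B, C x → C y → C (x + y)) → ∀ b : B, C b := by
    intro C helem h0 hadd b
    have hb : b ∈ ⨆ g : G, Bg g := by rw [hsum]; exact Submodule.mem_top
    exact Submodule.iSup_induction (motive := C) Bg hb helem h0 hadd
  -- induction principle for Y
  have indY : ∀ {C : B → Prop}, (∀ g ∈ M.nucleus, ∀ x ∈ Bg g, C x) → C 0 →
      (∀ x y : B, C x → C y → C (x + y)) → ∀ b ∈ Y, C b := by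
    intro C helem h0 hadd b hb
    rw [hY, iSup_subtype'] at hb
    exact Submodule.iSup_induction (motive := C) _ hb (fun i x hx => helem i.1 i.2 x hx)
      h0 hadd
  -- key associativity facts for a homogeneous element of nuclear degree
  have key1 : ∀ g ∈ M.nucleus, ∀ x ∈ Bg g, ∀ b c : B,
      mulB (mulB x b) c = mulB x (mulB b c) := by
    intro g hg x hx
    refine ind (C := fun b => ∀ c, mulB (mulB x b) c = mulB x (mulB b c)) ?_ ?_ ?_
    · intro h y hy
      refine ind (C := fun c => mulB (mulB x y) c = mulB x (mulB y c)) ?_ ?_ ?_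
      · intro s z hz
        rw [hassoc g h s x hx y hy z hz, M.t3_eq_e (hg h s).1, hacte]; rfl
      · simp
      · intro c₁ c₂ ih1 ih2; simp [map_add, ih1, ih2]
    · intro c; simp
    · intro b₁ b₂ ih1 ih2 c
      simp [map_add, LinearMap.add_apply, ih1 c, ih2 c]
  have key2 : ∀ g ∈ M.nucleus, ∀ x ∈ Bg g, ∀ b c : B,
      mulB (mulB b x) c = mulB b (mulB x c) := by
    intro g hg x hx
    refine ind (C := fun b => ∀ c, mulB (mulB b x) c = mulB b (mulB x c)) ?_ ?_ ?_
    · intro h y hy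
      refine ind (C := fun c => mulB (mulB y x) c = mulB y (mulB x c)) ?_ ?_ ?_
      · intro s z hz
        rw [hassoc h g s y hy x hx z hz, M.t3_eq_e (hg h s).2.1, hacte]; rfl
      · simp
      · intro c₁ c₂ ih1 ih2; simp [map_add, ih1, ih2]
    · intro c; simp
    · intro b₁ b₂ ih1 ih2 c
      simp [map_add, LinearMap.add_apply, ih1 c, ih2 c]
  have key3 : ∀ g ∈ M.nucleus, ∀ x ∈ Bg g, ∀ b c : B,
      mulB (mulB b c) x = mulB b (mulB c x) := by
    intro g hg x hx
    refine ind (C := fun b => ∀ c, mulB (mulB b c) x = mulB b (mulB c x)) ?_ ?_ ?_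
    · intro h y hy
      refine ind (C := fun c => mulB (mulB y c) x = mulB y (mulB c x)) ?_ ?_ ?_
      · intro s z hz
        rw [hassoc h s g y hy z hz x hx, M.t3_eq_e (hg h s).2.2, hacte]; rfl
      · simp
      · intro c₁ c₂ ih1 ih2; simp [map_add, LinearMap.add_apply, ih1, ih2]
    · intro c; simp
    · intro b₁ b₂ ih1 ih2 c
      simp [map_add, LinearMap.add_apply, ih1 c, ih2 c]
  -- part 1: Y is contained in the algebra nucleus
  have part1 : ∀ x ∈ Y, x ∈ algNucleus mulB := by
    refine indY (C := fun x => x ∈ algNucleus mulB) ?_ ?_ ?_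
    · intro g hg x hx b c
      exact ⟨key1 g hg x hx b c, key2 g hg x hx b c, key3 g hg x hx b c⟩
    · intro b c; simp
    · intro x₁ x₂ ih1 ih2 b c
      obtain ⟨h1, h2, h3⟩ := ih1 b c
      obtain ⟨h1', h2', h3'⟩ := ih2 b c
      refine ⟨?_, ?_, ?_⟩ <;>
        simp [map_add, LinearMap.add_apply, h1, h2, h3, h1', h2', h3']
  -- part 2: Y is closed under multiplication
  have part2 : ∀ x ∈ Y, ∀ y ∈ Y, mulB x y ∈ Y := by
    refine indY (C := fun x => ∀ y ∈ Y, mulB x y ∈ Y) ?_ ?_ ?_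
    · intro g hg x hx
      refine indY (C := fun y => mulB x y ∈ Y) ?_ ?_ ?_
      · intro h hh y hy
        exact Submodule.mem_iSup_of_mem _
          (Submodule.mem_iSup_of_mem (M.nucleus_mul hg hh) (hgr g h x hx y hy))
      · show mulB x 0 ∈ Y
        rw [map_zero]; exact Y.zero_mem
      · intro y₁ y₂ ih1 ih2
        show mulB x (y₁ + y₂) ∈ Y
        rw [map_add]; exact Y.add_mem ih1 ih2
    · intro y hy
      show mulB 0 y ∈ Y
      rw [map_zero, LinearMap.zero_apply]; exact Y.zero_mem
    · intro x₁ x₂ ih1 ih2 y hy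
      show mulB (x₁ + x₂) y ∈ Y
      rw [map_add, LinearMap.add_apply]; exact Y.add_mem (ih1 y hy) (ih2 y hy)
  exact ⟨part1, part2, fun x hx y _ z _ => (part1 x hx y z).1⟩
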